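/- For any s ∈ [-1, 0) and any x ∈ [0, 1), the function g(x) = (1/x - 1) · Li_s(x), where Li_s(x) = Σ_{k=1}^∞ x^k / k^s is the polylogarithm, is strictly increasing on (0, 1). -/

import Mathlib

/-- The polylogarithm `Li_s(x) = ∑_{k=1}^∞ x^k / k^s`. -/
noncomputable def Li (s x : ℝ) : ℝ := ∑' k : ℕ, x ^ (k + 1) / ((k : ℝ) + 1) ^ s

private lemma summable_aux (x t : ℝ) (hx0 : 0 ≤ x) (hx1 : x < 1) (ht : t ≤ 1) :
    Summable (fun k : ℕ => x ^ (k + 1) * ((k : ℝ) + 1) ^ t) := by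
  have hgeo : Summable (fun n : ℕ => (n : ℝ) ^ 1 * x ^ n) :=
    summable_pow_mul_geometric_of_norm_lt_one 1
      (by rwa [Real.norm_eq_abs, abs_of_nonneg hx0])
  have hshift : Summable (fun k : ℕ => ((k : ℝ) + 1) * x ^ (k + 1)) := by
    refine (hgeo.comp_injective (add_left_injective 1)).congr fun k => ?_
    simp [Function.comp]
  refine Summable.of_nonneg_of_le (fun k => by positivity) (fun k => ?_) hshift
  have h1 : (1 : ℝ) ≤ (k : ℝ) + 1 := by
    have := Nat.cast_nonneg (α := ℝ) k; linarith
  have h2 : ((k : ℝ) + 1) ^ t ≤ ((k : ℝ) + 1) ^ (1 : ℝ) :=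
    Real.rpow_le_rpow_of_exponent_le h1 ht
  rw [Real.rpow_one] at h2
  have h3 : (0 : ℝ) ≤ x ^ (k + 1) := pow_nonneg hx0 _
  nlinarith

private lemma summable_diff (x t : ℝ) (hx0 : 0 ≤ x) (hx1 : x < 1) (ht0 : 0 < t)
    (ht : t ≤ 1) :
    Summable (fun k : ℕ => x ^ (k + 1) * (((k : ℝ) + 2) ^ t - ((k : ℝ) + 1) ^ t)) := by
  have h1 : Summable (fun k : ℕ => x ^ (k + 1) * ((k : ℝ) + 1) ^ t) :=
    summable_aux x t hx0 hx1 ht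
  have h2 : Summable (fun k : ℕ => x ^ (k + 1) * ((k : ℝ) + 2) ^ t) := by
    have h3 : Summable (fun k : ℕ => x ^ (k + 2) * ((k : ℝ) + 2) ^ t) := by
      refine ((summable_aux x t hx0 hx1 ht).comp_injective (add_left_injective 1)).congr fun k => ?_
      simp only [Function.comp_apply]; push_cast; ring_nf
    have hx' : x ≠ 0 ∨ True := em' _ |>.symm.imp id (fun _ => trivial)
    rcases eq_or_lt_of_le hx0 with h | h
    · simpa [← h] using (summable_zero : Summable (fun _ : ℕ => (0:ℝ)))
    · have := h3.mul_left x⁻¹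
      refine this.congr fun k => ?_
      have hxne : x ≠ 0 := ne_of_gt h
      field_simp
      try ring
      try tauto
  simpa [mul_sub] using h2.sub h1

private lemma key (s x : ℝ) (hs : s ∈ Set.Ico (-1 : ℝ) 0) (hx : x ∈ Set.Ioo (0 : ℝ) 1) :
    (1 / x - 1) * Li s x
      = 1 + ∑' k : ℕ, x ^ (k + 1) * (((k : ℝ) + 2) ^ (-s) - ((k : ℝ) + 1) ^ (-s)) := by
  obtain ⟨hx0, hx1⟩ := hx
  obtain ⟨hs1, hs0⟩ := hs
  set t := -s with ht
  have ht0 : 0 < t := by simp [ht]; linarith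
  have ht1 : t ≤ 1 := by simp [ht]; linarith
  have hLi : Li s x = ∑' k : ℕ, x ^ (k + 1) * ((k : ℝ) + 1) ^ t := by
    unfold Li
    congr 1; funext k
    rw [ht, Real.rpow_neg (by positivity), div_eq_mul_inv]
  have hsum1 : Summable (fun k : ℕ => x ^ (k + 1) * ((k : ℝ) + 1) ^ t) :=
    summable_aux x t hx0.le hx1 ht1
  have hsum0 : Summable (fun k : ℕ => x ^ k * ((k : ℝ) + 1) ^ t) := by
    have := hsum1.mul_left x⁻¹
    refine this.congr fun k => ?_
    have hxne : x ≠ 0 := ne_of_gt hx0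
    field_simp
    try ring
    try tauto
  have hsum2 : Summable (fun k : ℕ => x ^ (k + 1) * ((k : ℝ) + 2) ^ t) := by
    refine (hsum0.comp_injective (add_left_injective 1)).congr fun k => ?_
    simp only [Function.comp_apply]; push_cast; ring_nf
  have step1 : (1 / x) * Li s x = ∑' k : ℕ, x ^ k * ((k : ℝ) + 1) ^ t := by
    rw [hLi, ← tsum_mul_left]
    congr 1; funext k
    rw [pow_succ]
    field_simp
  have step2 : ∑' k : ℕ, x ^ k * ((k : ℝ) + 1) ^ t
      = 1 + ∑' k : ℕ, x ^ (k + 1) * ((k : ℝ) + 2) ^ t := by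
    rw [Summable.tsum_eq_zero_add hsum0]
    simp only [pow_zero, Nat.cast_zero, zero_add, Real.one_rpow, one_mul]
    congr 1
    exact tsum_congr fun k => by push_cast; ring_nf
  have : (1 / x - 1) * Li s x = (1 / x) * Li s x - Li s x := by ring
  rw [this, step1, step2, hLi, add_sub_assoc, ← Summable.tsum_sub hsum2 hsum1]
  congr 1
  exact tsum_congr fun k => by ring

/-- For any `s ∈ [-1, 0)`, the function `x ↦ (1/x - 1) · Li_s(x)` is strictly
increasing on `(0, 1)`. -/
theorem stmt0 (s : ℝ) (hs : s ∈ Set.Ico (-1 : ℝ) 0) :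
    StrictMonoOn (fun x : ℝ => (1 / x - 1) * Li s x) (Set.Ioo (0 : ℝ) 1) := by
  intro x hx y hy hxy
  obtain ⟨hs1, hs0⟩ := hs
  have ht0 : 0 < -s := by linarith
  have ht1 : -s ≤ 1 := by linarith
  simp only
  rw [key s x ⟨hs1, hs0⟩ hx, key s y ⟨hs1, hs0⟩ hy]
  apply add_lt_add_right
  have hc : ∀ k : ℕ, 0 < ((k : ℝ) + 2) ^ (-s) - ((k : ℝ) + 1) ^ (-s) := by
    intro k
    have := Real.rpow_lt_rpow (x := (k : ℝ) + 1) (y := (k : ℝ) + 2)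
      (by positivity) (by linarith) ht0
    linarith
  refine Summable.tsum_lt_tsum (i := 0) (fun k => ?_) ?_
    (summable_diff x (-s) hx.1.le hx.2 ht0 ht1)
    (summable_diff y (-s) hy.1.le hy.2 ht0 ht1)
  · have := pow_le_pow_left₀ hx.1.le hxy.le (k + 1)
    nlinarith [hc k]
  · have hxy1 : x ^ (0 + 1) < y ^ (0 + 1) := by simpa using hxy
    nlinarith [hc 0]
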